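/- arXiv:2111.09396 — 4 statements merged into one kernel-verified Lean document; each statement's English description precedes it below -/
import Mathlib

section
/- Let Q ∈ ℝ^{n×n} be symmetric positive definite, A ∈ ℝ^{n×n}, B ∈ ℝ^{n×m}, R ∈ ℝ^{m×m} symmetric positive definite, ū ∈ ℝ^m, Ξ ∈ ℝ^{n×n} symmetric positive semidefinite, and ξ̄ ∈ ℝ^n. Suppose there exist scalars α, β, λ ≥ 0 such that the symmetric (n+1+m)×(n+1+m) block matrix −E − αF − βS − λT is positive semidefinite, where E = [[AᵀQ+QA, 0, QB],[0, 0, 0],[BᵀQ, 0, 0]], F = [[Q, 0, 0],[0, −1, 0],[0, 0, 0]], S = [[0, 0, 0],[0, 1−ūᵀRū, ūᵀR],[0, Rū, −R]], and T = [[−Ξ, Ξξ̄, 0],[ξ̄ᵀΞ, 1−ξ̄ᵀΞξ̄, 0],[0, 0, 0]]. Then for every t₀ ∈ ℝ, every differentiable function ζ : ℝ → ℝ^n, and every function u_c : ℝ → ℝ^m such that for all t ≥ t₀ one has ζ′(t) = Aζ(t) + Bu_c(t), (u_c(t)−ū)ᵀR(u_c(t)−ū) ≤ 1, and (ζ(t)−ξ̄)ᵀΞ(ζ(t)−ξ̄)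 ≤ 1, the implication holds: if ζ(t₀)ᵀQζ(t₀) ≤ 1 then ζ(t)ᵀQζ(t) ≤ 1 for all t ≥ t₀. -/
open Matrix

/-- 3×3 block matrix. -/
def blk3 {α β γ : Type*} (M11 : Matrix α α ℝ) (M12 : Matrix α β ℝ) (M13 : Matrix α γ ℝ)
    (M21 : Matrix β α ℝ) (M22 : Matrix β β ℝ) (M23 : Matrix β γ ℝ)
    (M31 : Matrix γ α ℝ) (M32 : Matrix γ β ℝ) (M33 : Matrix γ γ ℝ) :
    Matrix (α ⊕ (β ⊕ γ)) (α ⊕ (β ⊕ γ)) ℝ :=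
  Matrix.fromBlocks M11 (Matrix.of fun i j => Sum.elim (M12 i) (M13 i) j)
    (Matrix.of fun i j => Sum.elim (fun b => M21 b j) (fun c => M31 c j) i)
    (Matrix.fromBlocks M22 M23 M32 M33)

/-- 1×1 matrix with entry `c`. -/
def sc (c : ℝ) : Matrix (Fin 1) (Fin 1) ℝ := Matrix.of fun _ _ => c

/-- column matrix of a vector. -/
def colV {α : Type*} (v : α → ℝ) : Matrix α (Fin 1) ℝ := Matrix.of fun i _ => v i

/-- row matrix of a vector. -/
def rowV {α : Type*} (v : α → ℝ) : Matrix (Fin 1) α ℝ := Matrix.of fun _ j => v j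

lemma quad_blk3 {n m k : ℕ} (M11 : Matrix (Fin n) (Fin n) ℝ) (M12 : Matrix (Fin n) (Fin k) ℝ)
    (M13 : Matrix (Fin n) (Fin m) ℝ) (M21 : Matrix (Fin k) (Fin n) ℝ) (M22 : Matrix (Fin k) (Fin k) ℝ)
    (M23 : Matrix (Fin k) (Fin m) ℝ) (M31 : Matrix (Fin m) (Fin n) ℝ) (M32 : Matrix (Fin m) (Fin k) ℝ)
    (M33 : Matrix (Fin m) (Fin m) ℝ) (x : Fin n → ℝ) (y : Fin k → ℝ) (w : Fin m → ℝ) :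
    (Sum.elim x (Sum.elim y w)) ⬝ᵥ ((blk3 M11 M12 M13 M21 M22 M23 M31 M32 M33) *ᵥ (Sum.elim x (Sum.elim y w)))
    = x ⬝ᵥ (M11 *ᵥ x) + x ⬝ᵥ (M12 *ᵥ y) + x ⬝ᵥ (M13 *ᵥ w)
    + y ⬝ᵥ (M21 *ᵥ x) + y ⬝ᵥ (M22 *ᵥ y) + y ⬝ᵥ (M23 *ᵥ w)
    + w ⬝ᵥ (M31 *ᵥ x) + w ⬝ᵥ (M32 *ᵥ y) + w ⬝ᵥ (M33 *ᵥ w) := by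
  simp [blk3, Matrix.fromBlocks, dotProduct, Matrix.mulVec, Fintype.sum_sum_type,
    Finset.sum_add_distrib, Finset.mul_sum, mul_add]
  ring

lemma one_sc (c : ℝ) : (fun _ : Fin 1 => (1:ℝ)) ⬝ᵥ (sc c *ᵥ (fun _ => 1)) = c := by
  simp [sc, dotProduct, Matrix.mulVec]

lemma one_rowV {k : ℕ} (v w : Fin k → ℝ) :
    (fun _ : Fin 1 => (1:ℝ)) ⬝ᵥ (rowV v *ᵥ w) = v ⬝ᵥ w := by
  simp [rowV, dotProduct, Matrix.mulVec]

lemma colV_one {k : ℕ} (v w : Fin k → ℝ) :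
    w ⬝ᵥ (colV v *ᵥ (fun _ : Fin 1 => (1:ℝ))) = w ⬝ᵥ v := by
  simp [colV, dotProduct, Matrix.mulVec]

lemma hasDerivAt_quad {n : ℕ} (Q : Matrix (Fin n) (Fin n) ℝ) (ζ : ℝ → Fin n → ℝ)
    (hdiff : Differentiable ℝ ζ) (s : ℝ) :
    HasDerivAt (fun r => ζ r ⬝ᵥ (Q *ᵥ ζ r))
      (deriv ζ s ⬝ᵥ (Q *ᵥ ζ s) + ζ s ⬝ᵥ (Q *ᵥ deriv ζ s)) s := by
  have hd : HasDerivAt ζ (deriv ζ s) s := (hdiff s).hasDerivAt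
  have hcomp : ∀ i, HasDerivAt (fun r => ζ r i) (deriv ζ s i) s :=
    fun i => hasDerivAt_pi.mp hd i
  have H : HasDerivAt (fun r => ∑ i, ∑ j, ζ r i * (Q i j * ζ r j))
      (∑ i, ∑ j, (deriv ζ s i * (Q i j * ζ s j) + ζ s i * (Q i j * deriv ζ s j))) s := by
    apply HasDerivAt.fun_sum; intro i _
    apply HasDerivAt.fun_sum; intro j _
    simpa using (hcomp i).fun_mul ((hcomp j).const_mul (Q i j))
  have heq : (fun r => ζ r ⬝ᵥ (Q *ᵥ ζ r)) = (fun r => ∑ i, ∑ j, ζ r i * (Q i j * ζ r j)) := by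
    funext r; simp [dotProduct, Matrix.mulVec, Finset.mul_sum]
  rw [heq]
  convert H using 1
  simp [dotProduct, Matrix.mulVec, Finset.mul_sum, Finset.sum_add_distrib]

/-- **Lemma 1 (Invariant Ellipsoidal Set).** -/
theorem invariant_ellipsoidal_set {n m : ℕ}
    (Q A : Matrix (Fin n) (Fin n) ℝ) (B : Matrix (Fin n) (Fin m) ℝ)
    (R : Matrix (Fin m) (Fin m) ℝ) (ubar : Fin m → ℝ)
    (Ξ : Matrix (Fin n) (Fin n) ℝ) (ξbar : Fin n → ℝ)
    (hQ : Q.PosDef) (hR : R.PosDef) (hΞ : Ξ.PosSemidef)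
    (E F S T : Matrix ((Fin n) ⊕ ((Fin 1) ⊕ (Fin m))) ((Fin n) ⊕ ((Fin 1) ⊕ (Fin m))) ℝ)
    (hE : E = blk3 (Aᵀ * Q + Q * A) 0 (Q * B)
                   0 0 0
                   (Bᵀ * Q) 0 0)
    (hF : F = blk3 Q 0 0
                   0 (sc (-1)) 0
                   0 0 0)
    (hS : S = blk3 0 0 0
                   0 (sc (1 - ubar ⬝ᵥ (R *ᵥ ubar))) (rowV (ubar ᵥ* R))
                   0 (colV (R *ᵥ ubar)) (-R))
    (hT : T = blk3 (-Ξ) (colV (Ξ *ᵥ ξbar)) 0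
                   (rowV (ξbar ᵥ* Ξ)) (sc (1 - ξbar ⬝ᵥ (Ξ *ᵥ ξbar))) 0
                   0 0 0)
    (α β lam : ℝ) (hα : 0 ≤ α) (hβ : 0 ≤ β) (hlam : 0 ≤ lam)
    (hLMI : (-E - α • F - β • S - lam • T).PosSemidef) :
    ∀ (t₀ : ℝ) (ζ : ℝ → Fin n → ℝ) (u : ℝ → Fin m → ℝ),
      Differentiable ℝ ζ →
      (∀ t, t₀ ≤ t → deriv ζ t = A *ᵥ ζ t + B *ᵥ u t) →
      (∀ t, t₀ ≤ t → (u t - ubar) ⬝ᵥ (R *ᵥ (u t - ubar)) ≤ 1) →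
      (∀ t, t₀ ≤ t → (ζ t - ξbar) ⬝ᵥ (Ξ *ᵥ (ζ t - ξbar)) ≤ 1) →
      (ζ t₀) ⬝ᵥ (Q *ᵥ ζ t₀) ≤ 1 →
      ∀ t, t₀ ≤ t → (ζ t) ⬝ᵥ (Q *ᵥ ζ t) ≤ 1 := by
  intro t₀ ζ u hdiff hdyn hucon hxcon hinit t ht
  -- pointwise differential inequality from the LMI
  have key : ∀ s, t₀ ≤ s →
      deriv ζ s ⬝ᵥ (Q *ᵥ ζ s) + ζ s ⬝ᵥ (Q *ᵥ deriv ζ s)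
        + α * (ζ s ⬝ᵥ (Q *ᵥ ζ s) - 1) ≤ 0 := by
    intro s hs
    rw [hdyn s hs]
    set x : Fin n → ℝ := ζ s with hxdef
    set w : Fin m → ℝ := u s with hwdef
    have hu : (w - ubar) ⬝ᵥ (R *ᵥ (w - ubar)) ≤ 1 := hucon s hs
    have hx : (x - ξbar) ⬝ᵥ (Ξ *ᵥ (x - ξbar)) ≤ 1 := hxcon s hs
    set z : (Fin n) ⊕ ((Fin 1) ⊕ (Fin m)) → ℝ := Sum.elim x (Sum.elim (fun _ => (1:ℝ)) w) with hz
    have h0 : 0 ≤ z ⬝ᵥ ((-E - α • F - β • S - lam • T) *ᵥ z) := by have := hLMI.dotProduct_mulVec_nonneg z; rwa [star_trivial] at this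
    rw [hE, hF, hS, hT, hz] at h0
    simp only [Matrix.sub_mulVec, Matrix.neg_mulVec, Matrix.smul_mulVec,
      dotProduct_sub, dotProduct_neg, dotProduct_smul, smul_eq_mul, quad_blk3,
      one_sc, one_rowV, colV_one,
      Matrix.zero_mulVec, dotProduct_zero, add_zero, zero_add] at h0
    simp only [Matrix.neg_mulVec, dotProduct_neg, Matrix.add_mulVec, dotProduct_add,
      Matrix.mulVec_mulVec, dotProduct_mulVec, ← Matrix.vecMul_vecMul,
      Matrix.vecMul_transpose] at h0
    simp only [Matrix.mulVec_sub, dotProduct_sub, sub_dotProduct, Matrix.sub_vecMul,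
      dotProduct_mulVec] at hu hx
    simp only [add_dotProduct, Matrix.add_vecMul, Matrix.mulVec_add, dotProduct_add,
      dotProduct_mulVec, ← Matrix.vecMul_vecMul] at h0 hu hx ⊢
    have hbu : 0 ≤ β * (1 - ubar ᵥ* R ⬝ᵥ ubar + ubar ᵥ* R ⬝ᵥ w + (w ᵥ* R ⬝ᵥ ubar - w ᵥ* R ⬝ᵥ w)) := by
      apply mul_nonneg hβ; linarith
    have hlx : 0 ≤ lam * (-(x ᵥ* Ξ ⬝ᵥ x) + x ᵥ* Ξ ⬝ᵥ ξbar + (ξbar ᵥ* Ξ ⬝ᵥ x + (1 - ξbar ᵥ* Ξ ⬝ᵥ ξbar))) := by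
      apply mul_nonneg hlam; linarith
    nlinarith [h0, hbu, hlx]
  -- Gronwall-type argument
  set g : ℝ → ℝ := fun s => (ζ s ⬝ᵥ (Q *ᵥ ζ s) - 1) * Real.exp (α * s) with hgdef
  have hg : ∀ s, HasDerivAt g
      ((deriv ζ s ⬝ᵥ (Q *ᵥ ζ s) + ζ s ⬝ᵥ (Q *ᵥ deriv ζ s)) * Real.exp (α * s)
        + (ζ s ⬝ᵥ (Q *ᵥ ζ s) - 1) * (Real.exp (α * s) * α)) s := by
    intro s
    have he : HasDerivAt (fun s => Real.exp (α * s)) (Real.exp (α * s) * α) s := by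
      simpa using (((hasDerivAt_id s).const_mul α).exp)
    exact ((hasDerivAt_quad Q ζ hdiff s).sub_const 1).mul he
  have hanti : AntitoneOn g (Set.Ici t₀) := by
    apply antitoneOn_of_deriv_nonpos (convex_Ici t₀)
    · exact fun s _ => (hg s).continuousAt.continuousWithinAt
    · exact fun s hs => (hg s).differentiableAt.differentiableWithinAt
    · intro s hs
      rw [interior_Ici] at hs
      rw [(hg s).deriv]
      have hk := key s hs.le
      nlinarith [Real.exp_pos (α * s),
        mul_nonneg (by linarith : (0:ℝ) ≤ -(deriv ζ s ⬝ᵥ (Q *ᵥ ζ s) + ζ s ⬝ᵥ (Q *ᵥ deriv ζ s) + α * (ζ s ⬝ᵥ (Q *ᵥ ζ s) - 1))) (Real.exp_pos (α * s)).le]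
  have h1 : g t ≤ g t₀ := hanti Set.self_mem_Ici ht ht
  have h2 : g t₀ ≤ 0 := mul_nonpos_of_nonpos_of_nonneg (by linarith) (Real.exp_pos _).le
  have h3 : (ζ t ⬝ᵥ (Q *ᵥ ζ t) - 1) * Real.exp (α * t) ≤ 0 := le_trans h1 h2
  nlinarith [Real.exp_pos (α * t)]
end

section
/- Let X, Ψ ∈ ℝ^{p×p} be symmetric positive definite, ψ̄ ∈ ℝ^p, and δ ≥ 0. Define the symmetric (2p+1)×(2p+1) block matrices J = [[0, −XΨψ̄, −X],[−ψ̄ᵀΨX, −1+ψ̄ᵀΨψ̄, 0],[−X, 0, −Ψ⁻¹]] and W = [[−X, 0, 0],[0, 1, 0],[0, 0, 0]]. If −J − δW ⪰ 0, then {x ∈ ℝ^p : xᵀX⁻¹x ≤ 1} ⊆ {x ∈ ℝ^p : (x−ψ̄)ᵀΨ(x−ψ̄) ≤ 1}. -/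
open Matrix

lemma blk3_eq {α β γ : Type*} (M11 : Matrix α α ℝ) (M12 : Matrix α β ℝ) (M13 : Matrix α γ ℝ)
    (M21 : Matrix β α ℝ) (M22 : Matrix β β ℝ) (M23 : Matrix β γ ℝ)
    (M31 : Matrix γ α ℝ) (M32 : Matrix γ β ℝ) (M33 : Matrix γ γ ℝ) :
    blk3 M11 M12 M13 M21 M22 M23 M31 M32 M33 =
      fromBlocks M11 (fromCols M12 M13) (fromRows M21 M31) (fromBlocks M22 M23 M32 M33) := by
  ext (i|j|j2) (k|l|l2) <;> simp [blk3, fromBlocks, fromCols, fromRows_apply_inl, fromRows_apply_inr]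

lemma blk3_quad {α β γ : Type*} [Fintype α] [Fintype β] [Fintype γ]
    (M11 : Matrix α α ℝ) (M12 : Matrix α β ℝ) (M13 : Matrix α γ ℝ)
    (M21 : Matrix β α ℝ) (M22 : Matrix β β ℝ) (M23 : Matrix β γ ℝ)
    (M31 : Matrix γ α ℝ) (M32 : Matrix γ β ℝ) (M33 : Matrix γ γ ℝ)
    (u : α → ℝ) (t : β → ℝ) (w : γ → ℝ) :
    (u ⊕ᵥ (t ⊕ᵥ w)) ⬝ᵥ (blk3 M11 M12 M13 M21 M22 M23 M31 M32 M33 *ᵥ (u ⊕ᵥ (t ⊕ᵥ w))) =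
      u ⬝ᵥ (M11 *ᵥ u) + u ⬝ᵥ (M12 *ᵥ t) + u ⬝ᵥ (M13 *ᵥ w)
      + t ⬝ᵥ (M21 *ᵥ u) + t ⬝ᵥ (M22 *ᵥ t) + t ⬝ᵥ (M23 *ᵥ w)
      + w ⬝ᵥ (M31 *ᵥ u) + w ⬝ᵥ (M32 *ᵥ t) + w ⬝ᵥ (M33 *ᵥ w) := by
  rw [blk3_eq, fromBlocks_mulVec]
  simp only [Sum.elim_comp_inl, Sum.elim_comp_inr, fromCols_mulVec_sumElim,
    fromRows_mulVec, fromBlocks_mulVec, sumElim_dotProduct_sumElim, dotProduct_add]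
  ring
open Matrix

lemma colV_mulVec_one {α : Type*} (v : α → ℝ) : colV v *ᵥ (fun _ => (1:ℝ)) = v := by
  ext i; simp [colV, mulVec, dotProduct]

lemma one_dot_rowV_mulVec {α : Type*} [Fintype α] (v u : α → ℝ) :
    (fun _ => (1:ℝ)) ⬝ᵥ (rowV v *ᵥ u) = v ⬝ᵥ u := by
  simp [rowV, mulVec, dotProduct]

lemma one_dot_sc_one (c : ℝ) : (fun _ => (1:ℝ)) ⬝ᵥ (sc c *ᵥ (fun _ => (1:ℝ))) = c := by
  simp [sc, mulVec, dotProduct]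

lemma sym_dot {p : ℕ} {X : Matrix (Fin p) (Fin p) ℝ} (hXT : Xᵀ = X) (u v : Fin p → ℝ) :
    u ⬝ᵥ (X *ᵥ v) = (X *ᵥ u) ⬝ᵥ v := by
  rw [dotProduct_mulVec]
  congr 1
  rw [← hXT, vecMul_transpose, hXT]

/-- Safe-set inclusion from LMI (24): conclusion (ii) of Theorem 1. -/
theorem safe_set_inclusion {p : ℕ}
    (X Ψ : Matrix (Fin p) (Fin p) ℝ) (ψbar : Fin p → ℝ)
    (hX : X.PosDef) (hΨ : Ψ.PosDef)
    (δ : ℝ) (hδ : 0 ≤ δ)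
    (J W : Matrix ((Fin p) ⊕ ((Fin 1) ⊕ (Fin p))) ((Fin p) ⊕ ((Fin 1) ⊕ (Fin p))) ℝ)
    (hJ : J = blk3 0 (colV (-(X *ᵥ (Ψ *ᵥ ψbar)))) (-X)
                   (rowV (-((ψbar ᵥ* Ψ) ᵥ* X))) (sc (-1 + ψbar ⬝ᵥ (Ψ *ᵥ ψbar))) 0
                   (-X) 0 (-Ψ⁻¹))
    (hW : W = blk3 (-X) 0 0
                   0 (sc 1) 0
                   0 0 0)
    (hLMI : (-J - δ • W).PosSemidef) :
    {x : Fin p → ℝ | x ⬝ᵥ (X⁻¹ *ᵥ x) ≤ 1} ⊆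
      {x : Fin p → ℝ | (x - ψbar) ⬝ᵥ (Ψ *ᵥ (x - ψbar)) ≤ 1} := by
  intro x hx
  simp only [Set.mem_setOf_eq] at hx ⊢
  have hXT : Xᵀ = X := by simpa using hX.1.eq
  have hΨT : Ψᵀ = Ψ := by simpa using hΨ.1.eq
  have hXdet : IsUnit X.det := isUnit_iff_ne_zero.2 hX.det_pos.ne'
  have hΨdet : IsUnit Ψ.det := isUnit_iff_ne_zero.2 hΨ.det_pos.ne'
  set u : Fin p → ℝ := X⁻¹ *ᵥ x with hu
  set t : Fin 1 → ℝ := fun _ => (1:ℝ) with ht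
  set w : Fin p → ℝ := -(Ψ *ᵥ x) with hw
  have hXu : X *ᵥ u = x := by
    rw [hu, mulVec_mulVec, mul_nonsing_inv X hXdet, one_mulVec]
  have hΨw : Ψ⁻¹ *ᵥ w = -x := by
    rw [hw, mulVec_neg, mulVec_mulVec, nonsing_inv_mul Ψ hΨdet, one_mulVec]
  set z : (Fin p ⊕ (Fin 1 ⊕ Fin p)) → ℝ := u ⊕ᵥ (t ⊕ᵥ w) with hz
  have hpos := hLMI.dotProduct_mulVec_nonneg z
  rw [star_trivial] at hpos
  -- abbreviations
  set a : ℝ := x ⬝ᵥ (Ψ *ᵥ x) with ha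
  set b : ℝ := x ⬝ᵥ (Ψ *ᵥ ψbar) with hb
  set c : ℝ := ψbar ⬝ᵥ (Ψ *ᵥ ψbar) with hc
  set r : ℝ := x ⬝ᵥ (X⁻¹ *ᵥ x) with hr
  have hb' : ψbar ⬝ᵥ (Ψ *ᵥ x) = b := by
    rw [sym_dot hΨT, dotProduct_comm]
  have hQJ : z ⬝ᵥ (J *ᵥ z) = a - 2*b + c - 1 := by
    rw [hz, hJ, blk3_quad]
    have h2 : u ⬝ᵥ (colV (-(X *ᵥ (Ψ *ᵥ ψbar))) *ᵥ t) = -b := by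
      rw [ht, colV_mulVec_one, dotProduct_neg, sym_dot hXT, hXu]
    have h3 : u ⬝ᵥ ((-X) *ᵥ w) = a := by
      rw [neg_mulVec, dotProduct_neg, sym_dot hXT, hXu, hw, dotProduct_neg,
        neg_neg]
    have h4 : t ⬝ᵥ (rowV (-((ψbar ᵥ* Ψ) ᵥ* X)) *ᵥ u) = -b := by
      rw [ht, one_dot_rowV_mulVec, neg_dotProduct,
        ← dotProduct_mulVec (ψbar ᵥ* Ψ) X u, hXu,
        ← dotProduct_mulVec ψbar Ψ x, hb']
    have h5 : t ⬝ᵥ (sc (-1 + c) *ᵥ t) = -1 + c := by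
      rw [ht, one_dot_sc_one]
    have h7 : w ⬝ᵥ ((-X) *ᵥ u) = a := by
      rw [neg_mulVec, dotProduct_neg, hXu, hw, neg_dotProduct, neg_neg,
        dotProduct_comm]
    have h9 : w ⬝ᵥ ((-Ψ⁻¹) *ᵥ w) = -a := by
      rw [neg_mulVec, dotProduct_neg, hΨw, hw, neg_dotProduct, dotProduct_neg,
        neg_neg, dotProduct_comm]
    rw [h2, h3, h4, h5, h7, h9]
    simp
    ring
  have hQW : z ⬝ᵥ (W *ᵥ z) = 1 - r := by
    rw [hz, hW, blk3_quad]
    have h1 : u ⬝ᵥ ((-X) *ᵥ u) = -r := by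
      rw [neg_mulVec, dotProduct_neg, sym_dot hXT, hXu, hu, hr]
    have h5 : t ⬝ᵥ (sc 1 *ᵥ t) = 1 := by rw [ht, one_dot_sc_one]
    rw [h1, h5]
    simp
    ring
  have hM : z ⬝ᵥ ((-J - δ • W) *ᵥ z) = -(a - 2*b + c - 1) - δ * (1 - r) := by
    rw [sub_mulVec, dotProduct_sub, neg_mulVec, dotProduct_neg, hQJ,
      smul_mulVec, dotProduct_smul, hQW, smul_eq_mul]
  rw [hM] at hpos
  have hq : (x - ψbar) ⬝ᵥ (Ψ *ᵥ (x - ψbar)) = a - 2*b + c := by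
    rw [sub_dotProduct, mulVec_sub, dotProduct_sub, dotProduct_sub, hb']
    rw [← ha, ← hb, ← hc]
    ring
  rw [hq]
  nlinarith [hpos, hx, hδ]
end

section
/- Let p, m ≥ 1. Let Q = [[Y, N],[Nᵀ, Ỹ]] ∈ ℝ^{2p×2p} be invertible with inverse Q⁻¹ = [[X, M],[Mᵀ, X̃]] (all blocks p×p, Y, Ỹ, X, X̃ symmetric), and define Π₁ = [[X, I_p],[Mᵀ, 0]] and Π₂ = [[I_p, Y],[0, Nᵀ]]. Let A_p ∈ ℝ^{p×p}, B_p ∈ ℝ^{p×m}, diagonal Γ_c, Γ_f ∈ ℝ^{m×m} with Γ_c + Γ_f = I_m, A_f ∈ ℝ^{p×p}, B_f ∈ ℝ^{p×m}, C_f ∈ ℝ^{m×p}, D_f ∈ ℝ^{m×m}, and set A = [[A_p, B_pΓ_fC_f],[0, A_f]], B = [[B_pΓ_fD_f + B_pΓ_c],[B_f]], C_z = [0, C_f]. Define Â_f = YA_pX + YB_pΓ_fC_fMᵀ + NA_fMᵀ, B̂_f = YB_pΓ_fD_f + NB_f, Ĉ_f = C_fMᵀ, D̂_f = D_f. Then the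 following identities hold: QΠ₁ = Π₂; Π₁ᵀQΠ₁ = [[X, I_p],[I_p, Y]]; Π₁ᵀQAΠ₁ = [[A_pX + B_pΓ_fĈ_f, A_p],[Â_f, YA_p]]; Π₁ᵀQB = [[B_pΓ_fD̂_f + B_pΓ_c],[B̂_f + YB_pΓ_c]]; and C_zΠ₁ = [Ĉ_f, 0]. -/
open Matrix

/-- vertical concatenation of two matrices with the same column index. -/
def vcat {α β κ : Type*} (M₁ : Matrix α κ ℝ) (M₂ : Matrix β κ ℝ) : Matrix (α ⊕ β) κ ℝ :=
  Matrix.of fun i j => Sum.elim (fun a => M₁ a j) (fun b => M₂ b j) i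

/-- horizontal concatenation of two matrices with the same row index. -/
def hcat {α β κ : Type*} (M₁ : Matrix κ α ℝ) (M₂ : Matrix κ β ℝ) : Matrix κ (α ⊕ β) ℝ :=
  Matrix.of fun i j => Sum.elim (M₁ i) (M₂ i) j

lemma vcat_eq_fromRows {α β κ : Type*} (M₁ : Matrix α κ ℝ) (M₂ : Matrix β κ ℝ) :
    vcat M₁ M₂ = Matrix.fromRows M₁ M₂ := by
  ext (i | i) j <;> rfl

lemma hcat_eq_fromColumns {α β κ : Type*} (M₁ : Matrix κ α ℝ) (M₂ : Matrix κ β ℝ) :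
    hcat M₁ M₂ = Matrix.fromCols M₁ M₂ := by
  ext i (j | j) <;> rfl

lemma fromRows_congr {α β κ : Type*} {A A' : Matrix α κ ℝ} {B B' : Matrix β κ ℝ}
    (h1 : A = A') (h2 : B = B') : Matrix.fromRows A B = Matrix.fromRows A' B' := by
  rw [h1, h2]

lemma fromColumns_congr {α β κ : Type*} {A A' : Matrix κ α ℝ} {B B' : Matrix κ β ℝ}
    (h1 : A = A') (h2 : B = B') : Matrix.fromCols A B = Matrix.fromCols A' B' := by
  rw [h1, h2]

/-- Linearizing change-of-variables identities (Scherer et al.) used in Theorem 1. -/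
theorem change_of_variables_identities {p m : ℕ} (hp : 1 ≤ p) (hm : 1 ≤ m)
    (Y N Ytilde X M Xtilde : Matrix (Fin p) (Fin p) ℝ)
    (hY : Y.IsSymm) (hYt : Ytilde.IsSymm) (hX : X.IsSymm) (hXt : Xtilde.IsSymm)
    (hinv : (Matrix.fromBlocks Y N Nᵀ Ytilde) * (Matrix.fromBlocks X M Mᵀ Xtilde) = 1)
    (hinv' : (Matrix.fromBlocks X M Mᵀ Xtilde) * (Matrix.fromBlocks Y N Nᵀ Ytilde) = 1)
    (Ap : Matrix (Fin p) (Fin p) ℝ) (Bp : Matrix (Fin p) (Fin m) ℝ)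
    (Γc Γf : Matrix (Fin m) (Fin m) ℝ) (hΓc : Γc.IsDiag) (hΓf : Γf.IsDiag)
    (hΓ : Γc + Γf = 1)
    (Af : Matrix (Fin p) (Fin p) ℝ) (Bf : Matrix (Fin p) (Fin m) ℝ)
    (Cf : Matrix (Fin m) (Fin p) ℝ) (Df : Matrix (Fin m) (Fin m) ℝ)
    (Q A : Matrix ((Fin p) ⊕ (Fin p)) ((Fin p) ⊕ (Fin p)) ℝ)
    (B : Matrix ((Fin p) ⊕ (Fin p)) (Fin m) ℝ) (Cz : Matrix (Fin m) ((Fin p) ⊕ (Fin p)) ℝ)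
    (hQ : Q = Matrix.fromBlocks Y N Nᵀ Ytilde)
    (hA : A = Matrix.fromBlocks Ap (Bp * Γf * Cf) 0 Af)
    (hB : B = vcat (Bp * Γf * Df + Bp * Γc) Bf)
    (hCz : Cz = hcat 0 Cf)
    (Pi1 Pi2 : Matrix ((Fin p) ⊕ (Fin p)) ((Fin p) ⊕ (Fin p)) ℝ)
    (hPi1 : Pi1 = Matrix.fromBlocks X 1 Mᵀ 0)
    (hPi2 : Pi2 = Matrix.fromBlocks 1 Y 0 Nᵀ)
    (Afh : Matrix (Fin p) (Fin p) ℝ) (Bfh : Matrix (Fin p) (Fin m) ℝ)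
    (Cfh : Matrix (Fin m) (Fin p) ℝ) (Dfh : Matrix (Fin m) (Fin m) ℝ)
    (hAfh : Afh = Y * Ap * X + Y * Bp * Γf * Cf * Mᵀ + N * Af * Mᵀ)
    (hBfh : Bfh = Y * Bp * Γf * Df + N * Bf)
    (hCfh : Cfh = Cf * Mᵀ) (hDfh : Dfh = Df) :
    Q * Pi1 = Pi2 ∧
    Pi1ᵀ * Q * Pi1 = Matrix.fromBlocks X 1 1 Y ∧
    Pi1ᵀ * (Q * A) * Pi1 = Matrix.fromBlocks (Ap * X + Bp * Γf * Cfh) Ap Afh (Y * Ap) ∧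
    Pi1ᵀ * (Q * B) = vcat (Bp * Γf * Dfh + Bp * Γc) (Bfh + Y * Bp * Γc) ∧
    Cz * Pi1 = hcat Cfh 0 := by
  subst hQ hA hB hCz hPi1 hPi2 hAfh hBfh hCfh hDfh
  rw [Matrix.fromBlocks_multiply, ← Matrix.fromBlocks_one] at hinv hinv'
  obtain ⟨e11, e12, e21, e22⟩ := Matrix.fromBlocks_inj.mp hinv
  obtain ⟨f11, f12, f21, f22⟩ := Matrix.fromBlocks_inj.mp hinv'
  have hPt : (Matrix.fromBlocks X (1 : Matrix (Fin p) (Fin p) ℝ) Mᵀ 0)ᵀ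
      = Matrix.fromBlocks X M 1 0 := by
    rw [Matrix.fromBlocks_transpose, Matrix.transpose_one, Matrix.transpose_zero,
      Matrix.transpose_transpose, hX]
  -- key cancellation lemmas
  have key : ∀ {κ : Type} [Fintype κ] (W : Matrix (Fin p) κ ℝ) (V : Matrix (Fin p) κ ℝ),
      X * (Y * W + N * V) + M * (Nᵀ * W + Ytilde * V) = W := by
    intro κ _ W V
    rw [Matrix.mul_add, Matrix.mul_add, ← Matrix.mul_assoc, ← Matrix.mul_assoc,
      ← Matrix.mul_assoc, ← Matrix.mul_assoc]
    calc X * Y * W + X * N * V + (M * Nᵀ * W + M * Ytilde * V)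
        = (X * Y + M * Nᵀ) * W + (X * N + M * Ytilde) * V := by
          rw [Matrix.add_mul, Matrix.add_mul]; abel
      _ = W := by rw [f11, f12, Matrix.one_mul, Matrix.zero_mul, add_zero]
  have key' : ∀ (W : Matrix (Fin p) (Fin p) ℝ),
      X * (Y * W) + M * (Nᵀ * W) = W := by
    intro W
    have := key W (0 : Matrix (Fin p) (Fin p) ℝ)
    simpa using this
  refine ⟨?_, ?_, ?_, ?_, ?_⟩
  · rw [Matrix.fromBlocks_multiply, e11, e21]
    simp
  · rw [hPt, Matrix.fromBlocks_multiply]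
    simp only [Matrix.one_mul, Matrix.zero_mul, Matrix.mul_one, Matrix.mul_zero,
      add_zero, zero_add]
    rw [f11, f12, Matrix.fromBlocks_multiply]
    simp only [Matrix.one_mul, Matrix.zero_mul, Matrix.mul_one, Matrix.mul_zero,
      add_zero, zero_add]
    rw [e11]
  · rw [hPt, Matrix.fromBlocks_multiply]
    simp only [Matrix.mul_zero, add_zero, Matrix.zero_mul, zero_add]
    rw [Matrix.fromBlocks_multiply]
    simp only [Matrix.one_mul, Matrix.zero_mul, Matrix.mul_one, Matrix.mul_zero,
      add_zero, zero_add]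
    rw [key' Ap, key (Bp * Γf * Cf) Af, Matrix.fromBlocks_multiply]
    simp only [Matrix.one_mul, Matrix.zero_mul, Matrix.mul_one, Matrix.mul_zero,
      add_zero, zero_add]
    rw [Matrix.fromBlocks_inj]
    refine ⟨by rw [Matrix.mul_assoc (Bp * Γf) Cf Mᵀ], rfl, ?_, rfl⟩
    rw [Matrix.add_mul, ← Matrix.mul_assoc Y (Bp * Γf) Cf, ← Matrix.mul_assoc Y Bp Γf,
      ← add_assoc]
  · rw [vcat_eq_fromRows, vcat_eq_fromRows, Matrix.fromBlocks_mul_fromRows, hPt,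
      Matrix.fromBlocks_mul_fromRows]
    refine fromRows_congr ?_ ?_
    · rw [key]
    · simp only [Matrix.one_mul, Matrix.zero_mul, add_zero]
      rw [Matrix.mul_add, ← Matrix.mul_assoc Y (Bp * Γf) Dfh, ← Matrix.mul_assoc Y Bp Γf,
        ← Matrix.mul_assoc Y Bp Γc]
      abel
  · rw [hcat_eq_fromColumns, hcat_eq_fromColumns, Matrix.fromCols_mul_fromBlocks]
    refine fromColumns_congr ?_ ?_
    · simp
    · simp
end

section
/- Let X, Y ∈ ℝ^{p×p} be symmetric matrices such that the block matrix [[X, I_p],[I_p, Y]] is positive definite. Then there exist invertible matrices M, N ∈ ℝ^{p×p} and symmetric matrices Ỹ, X̃ ∈ ℝ^{p×p} such that Q := [[Y, N],[Nᵀ, Ỹ]] is symmetric positive definite and Q⁻¹ = [[X, M],[Mᵀ, X̃]]. -/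
open Matrix

section Aux
variable {m n : Type*} [Fintype m] [Fintype n] [DecidableEq m] [DecidableEq n]

lemma symm_of_posDef_aux {A : Matrix n n ℝ} (hA : A.PosDef) : Aᵀ = A := by
  rw [← Matrix.conjTranspose_eq_transpose_of_trivial]; exact hA.isHermitian

lemma posDef_conj_aux {A B : Matrix n n ℝ} (hA : A.PosDef) (hB : IsUnit B) :
    (Bᵀ * A * B).PosDef := by
  have hAs := symm_of_posDef_aux hA
  refine Matrix.PosDef.of_dotProduct_mulVec_pos ?_ ?_
  · rw [Matrix.IsHermitian] at *
    simp [Matrix.conjTranspose_mul, Matrix.mul_assoc,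
      Matrix.conjTranspose_eq_transpose_of_trivial, hAs]
  · intro x hx
    have hBx : B *ᵥ x ≠ 0 := by
      intro h0
      exact hx ((Matrix.mulVec_injective_iff_isUnit.mpr hB) (by simpa using h0))
    have := hA.dotProduct_mulVec_pos hBx
    have key : star x ⬝ᵥ (Bᵀ * A * B) *ᵥ x = star (B *ᵥ x) ⬝ᵥ A *ᵥ (B *ᵥ x) := by
      rw [star_trivial, star_trivial, ← Matrix.mulVec_mulVec, Matrix.dotProduct_mulVec,
        ← Matrix.vecMul_vecMul, Matrix.vecMul_transpose, ← Matrix.dotProduct_mulVec]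
    rwa [key]

lemma posDef_blockDiag_aux {A : Matrix m m ℝ} {D : Matrix n n ℝ}
    (hA : A.PosDef) (hD : D.PosDef) : (Matrix.fromBlocks A 0 0 D).PosDef := by
  refine Matrix.PosDef.of_dotProduct_mulVec_pos ?_ ?_
  · rw [Matrix.IsHermitian, Matrix.fromBlocks_conjTranspose]
    simp only [Matrix.conjTranspose_zero, Matrix.fromBlocks_inj]
    exact ⟨hA.isHermitian.eq, trivial, trivial, hD.isHermitian.eq⟩
  · intro x hx
    have hxe : x = Sum.elim (x ∘ Sum.inl) (x ∘ Sum.inr) := (Sum.elim_comp_inl_inr x).symm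
    rw [hxe, Matrix.fromBlocks_mulVec]
    simp only [Matrix.zero_mulVec, add_zero, zero_add, star_trivial]
    rw [sumElim_dotProduct_sumElim]
    rcases (by
      by_contra hcon
      push_neg at hcon
      apply hx
      funext i; cases i with
      | inl i => exact congrFun hcon.1 i
      | inr i => exact congrFun hcon.2 i : x ∘ Sum.inl ≠ 0 ∨ x ∘ Sum.inr ≠ 0) with h1 | h1
    · exact add_pos_of_pos_of_nonneg (by simpa using hA.dotProduct_mulVec_pos h1) (by simpa using hD.posSemidef.dotProduct_mulVec_nonneg _)
    · exact add_pos_of_nonneg_of_pos (by simpa using hA.posSemidef.dotProduct_mulVec_nonneg _) (by simpa using hD.dotProduct_mulVec_pos h1)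

end Aux

/-- Matrix-completion fact: if `[[X, I],[I, Y]] ≻ 0` then a positive definite `Q` with
prescribed (1,1)-blocks of `Q` and `Q⁻¹` can be constructed. -/
theorem lyapunov_matrix_completion {p : ℕ}
    (X Y : Matrix (Fin p) (Fin p) ℝ) (hX : X.IsSymm) (hY : Y.IsSymm)
    (h : (Matrix.fromBlocks X (1 : Matrix (Fin p) (Fin p) ℝ)
            (1 : Matrix (Fin p) (Fin p) ℝ) Y).PosDef) :
    ∃ (M N Ytilde Xtilde : Matrix (Fin p) (Fin p) ℝ),
      IsUnit M ∧ IsUnit N ∧ Ytilde.IsSymm ∧ Xtilde.IsSymm ∧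
      (Matrix.fromBlocks Y N Nᵀ Ytilde).PosDef ∧
      (Matrix.fromBlocks Y N Nᵀ Ytilde)⁻¹ = Matrix.fromBlocks X M Mᵀ Xtilde := by
  -- Y is positive definite
  have hYpd : Y.PosDef := by
    refine Matrix.PosDef.of_dotProduct_mulVec_pos (by rw [Matrix.IsHermitian, Matrix.conjTranspose_eq_transpose_of_trivial]; exact hY) ?_
    intro v hv
    have hv' : Sum.elim (0 : Fin p → ℝ) v ≠ 0 := by
      intro h0; apply hv; funext i; exact congrFun h0 (Sum.inr i)
    have := h.dotProduct_mulVec_pos hv'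
    rw [Matrix.fromBlocks_mulVec] at this
    simpa [sumElim_dotProduct_sumElim] using this
  have hYdet : IsUnit Y.det := hYpd.det_pos.ne'.isUnit
  haveI : Invertible Y := hYpd.isUnit.invertible
  have hYinvS : (Y⁻¹)ᵀ = Y⁻¹ := by rw [Matrix.transpose_nonsing_inv, hY]
  -- the Schur complement M = X - Y⁻¹ is positive definite
  set M : Matrix (Fin p) (Fin p) ℝ := X - Y⁻¹ with hMdef
  have hMsymm : Mᵀ = M := by rw [hMdef, Matrix.transpose_sub, hX, hYinvS]
  have hMpd : M.PosDef := by
    refine Matrix.PosDef.of_dotProduct_mulVec_pos (by rw [Matrix.IsHermitian, Matrix.conjTranspose_eq_transpose_of_trivial]; exact hMsymm) ?_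
    intro v hv
    have key := Matrix.schur_complement_eq₂₂ (α := ℝ) X (1 : Matrix (Fin p) (Fin p) ℝ)
      v (-((Y⁻¹ * (1 : Matrix (Fin p) (Fin p) ℝ)ᴴ) *ᵥ v)) hYpd.isHermitian
    have hv' : Sum.elim v (-((Y⁻¹ * (1 : Matrix (Fin p) (Fin p) ℝ)ᴴ) *ᵥ v)) ≠ 0 := by
      intro h0; apply hv; funext i; exact congrFun h0 (Sum.inl i)
    have hpos := h.dotProduct_mulVec_pos hv'
    rw [Matrix.dotProduct_mulVec] at hpos
    have hone : (1 : Matrix (Fin p) (Fin p) ℝ)ᴴ = 1 := Matrix.conjTranspose_one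
    rw [hone] at key hpos
    rw [key] at hpos
    simpa [hMdef, Matrix.dotProduct_mulVec] using hpos
  have hMdet : IsUnit M.det := hMpd.det_pos.ne'.isUnit
  haveI : Invertible M := hMpd.isUnit.invertible
  have hMM : M * M⁻¹ = 1 := Matrix.mul_nonsing_inv M hMdet
  have hMM' : M⁻¹ * M = 1 := Matrix.nonsing_inv_mul M hMdet
  have hYY : Y * Y⁻¹ = 1 := Matrix.mul_nonsing_inv Y hYdet
  have hYY' : Y⁻¹ * Y = 1 := Matrix.nonsing_inv_mul Y hYdet
  -- congruence matrix
  set U : Matrix (Fin p ⊕ Fin p) (Fin p ⊕ Fin p) ℝ := Matrix.fromBlocks 1 0 1 1 with hUdef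
  have hUunit : IsUnit U := by
    apply (Matrix.isUnit_iff_isUnit_det _).mpr (Matrix.isUnit_det_of_right_inverse (B := Matrix.fromBlocks 1 0 (-1) 1) ?_)
    rw [hUdef, Matrix.fromBlocks_multiply, ← Matrix.fromBlocks_one]
    congr 1 <;> simp
  -- P := the intended Q⁻¹
  set P : Matrix (Fin p ⊕ Fin p) (Fin p ⊕ Fin p) ℝ := Matrix.fromBlocks X M M M with hPdef
  have hPcong : Uᵀ * Matrix.fromBlocks Y⁻¹ 0 0 M * U = P := by
    rw [hUdef, hPdef, Matrix.fromBlocks_transpose, Matrix.fromBlocks_multiply,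
      Matrix.fromBlocks_multiply]
    congr 1 <;> simp [hMdef]
  have hPpd : P.PosDef := by
    rw [← hPcong]
    exact posDef_conj_aux (posDef_blockDiag_aux hYpd.inv hMpd) hUunit
  -- Q and the verification Q * P = 1
  set N : Matrix (Fin p) (Fin p) ℝ := -Y with hNdef
  set Yt : Matrix (Fin p) (Fin p) ℝ := M⁻¹ + Y with hYtdef
  set Q : Matrix (Fin p ⊕ Fin p) (Fin p ⊕ Fin p) ℝ := Matrix.fromBlocks Y N Nᵀ Yt with hQdef
  have hNT : Nᵀ = -Y := by rw [hNdef, Matrix.transpose_neg, hY]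
  have hQP : Q * P = 1 := by
    rw [hQdef, hPdef, hNT, hNdef, hYtdef, Matrix.fromBlocks_multiply, ← Matrix.fromBlocks_one,
      Matrix.fromBlocks_inj]
    refine ⟨?_, ?_, ?_, ?_⟩
    · rw [Matrix.neg_mul, hMdef, Matrix.mul_sub, hYY]; abel
    · rw [Matrix.neg_mul]; abel
    · rw [Matrix.add_mul, hMM', Matrix.neg_mul, hMdef, Matrix.mul_sub, hYY]; abel
    · rw [Matrix.add_mul, hMM', Matrix.neg_mul]; abel
  have hQinv : Q⁻¹ = P := Matrix.inv_eq_right_inv hQP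
  have hQpd : Q.PosDef := by
    have : P⁻¹ = Q := Matrix.inv_eq_left_inv hQP
    rw [← this]
    exact hPpd.inv
  -- symmetry of the tilde blocks
  have hMinvS : (M⁻¹)ᵀ = M⁻¹ := by rw [Matrix.transpose_nonsing_inv, hMsymm]
  refine ⟨M, N, Yt, M, hMpd.isUnit, ?_, ?_, hMsymm, hQpd, ?_⟩
  · rw [hNdef]; exact hYpd.isUnit.neg
  · rw [hYtdef, Matrix.IsSymm, Matrix.transpose_add, hMinvS, hY]
  · rw [hQinv, hPdef, hMsymm]
end
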